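/- Let μ : M → ℝ³ be a continuous map on a topological space M, and suppose ‖μ(s)‖ ≤ K for all s ∈ M (with K > 0). If (t,s,z,w) ∈ ℝ_{>0} × M × ℂ × ℂ satisfies t²·μ(s) = (½(|z|² − |w|²), i·z·w) and t² + |z|² + |w|² = 1, then t² ≥ 1/(1 + 2K). In particular t is bounded away from zero on this set. -/

import Mathlib

/-- Key estimate for the three-Sasaki modification: if `‖μ‖ ≤ K` on `M` (K > 0),
`t > 0`, `t²·μ(s) = (½(|z|² − |w|²), i·z·w)` and `t² + |z|² + |w|² = 1`, then
`t² ≥ 1/(1 + 2K)`; in particular `t` is bounded away from zero. -/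
theorem stmt_4 {M : Type*} [TopologicalSpace M] (μ : M → ℝ × ℂ)
    (hμ : Continuous μ) (K : ℝ) (hK : 0 < K)
    (hbound : ∀ s : M, Real.sqrt ((μ s).1 ^ 2 + ‖(μ s).2‖ ^ 2) ≤ K)
    (t : ℝ) (s : M) (z w : ℂ) (ht : 0 < t)
    (hlevel : (t ^ 2 * (μ s).1, (t ^ 2 : ℂ) * (μ s).2) =
      ((1 / 2 : ℝ) * (‖z‖ ^ 2 - ‖w‖ ^ 2), Complex.I * z * w))
    (hunit : t ^ 2 + ‖z‖ ^ 2 + ‖w‖ ^ 2 = 1) :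
    1 / (1 + 2 * K) ≤ t ^ 2 := by
  have h1 : t ^ 2 * (μ s).1 = (1 / 2 : ℝ) * (‖z‖ ^ 2 - ‖w‖ ^ 2) :=
    congrArg Prod.fst hlevel
  have h2c : (t ^ 2 : ℂ) * (μ s).2 = Complex.I * z * w := congrArg Prod.snd hlevel
  have h2 : t ^ 2 * ‖(μ s).2‖ = ‖z‖ * ‖w‖ := by
    have := congrArg (fun x : ℂ => ‖x‖) h2c
    simpa [norm_mul, Complex.norm_I, abs_of_pos (pow_pos ht 2)] using this
  set S := Real.sqrt ((μ s).1 ^ 2 + ‖(μ s).2‖ ^ 2) with hSdef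
  have hSnn : 0 ≤ S := Real.sqrt_nonneg _
  have hS2 : S ^ 2 = (μ s).1 ^ 2 + ‖(μ s).2‖ ^ 2 :=
    Real.sq_sqrt (by positivity)
  have hSK : S ≤ K := hbound s
  have hnn : 0 ≤ 1 - t ^ 2 := by
    nlinarith [sq_nonneg (‖z‖), sq_nonneg (‖w‖)]
  have hsq : (t ^ 2 * S) ^ 2 = ((1 - t ^ 2) / 2) ^ 2 := by
    have : (t ^ 2 * S) ^ 2 = (t ^ 2 * (μ s).1) ^ 2 + (t ^ 2 * ‖(μ s).2‖) ^ 2 := by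
      rw [mul_pow, hS2]; ring
    rw [this, h1, h2]
    nlinarith [hunit]
  have h3 : t ^ 2 * S = (1 - t ^ 2) / 2 := by
    have h4 : 0 ≤ t ^ 2 * S := by positivity
    nlinarith [hsq]
  rw [div_le_iff₀ (by positivity)]
  nlinarith [mul_le_mul_of_nonneg_left hSK (le_of_lt (pow_pos ht 2))]
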